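/- arXiv:1606.06730 — 2 statements merged into one kernel-verified Lean document; each statement's English description precedes it below -/
import Mathlib

section
/- For integers k ≥ t ≥ 2 and v ≥ 2, there exists a covering array CA(N; t, k, v) with N ≤ (log(C(k,t)) + t·log v) / log(v^t/(v^t−1)). (Stein–Lovász–Johnson bound.) -/
open scoped Classical

/-- `A` is a covering array of strength `t`: every `t` distinct columns contain
every `t`-tuple of symbols in some row. -/
def IsCoveringArray {N k v : ℕ} (t : ℕ) (A : Fin N → Fin k → Fin v) : Prop :=
  ∀ c : Fin t → Fin k, Function.Injective c → ∀ a : Fin t → Fin v,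
    ∃ r : Fin N, ∀ i : Fin t, A r (c i) = a i

def CoversRow {k v : ℕ} (r : Fin k → Fin v) (g : Fin k → Option (Fin v)) : Prop :=
  ∀ j a, g j = some a → r j = a

lemma card_covering_rows_ge {k v t : ℕ} (hv : 0 < v) (htk : t ≤ k)
    (g : Fin k → Option (Fin v))
    (hg : (Finset.univ.filter fun j => g j ≠ none).card = t) :
    v ^ (k - t) ≤ (Finset.univ.filter fun r : Fin k → Fin v => CoversRow r g).card := by
  have hzero : Fin v := ⟨0, hv⟩
  have hcardS : Fintype.card {j : Fin k // g j = none} = k - t := by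
    rw [Fintype.card_subtype]
    have h2 := Finset.card_filter_add_card_filter_not (s := (Finset.univ : Finset (Fin k)))
      (p := fun j => g j ≠ none)
    simp only [Finset.card_univ, Fintype.card_fin, not_not] at h2
    omega
  set F : ({j : Fin k // g j = none} → Fin v) → {r : Fin k → Fin v // CoversRow r g} :=
    fun h => ⟨fun j => if hj : g j = none then h ⟨j, hj⟩ else (g j).getD hzero, by
      intro j a ha
      simp only []
      rw [dif_neg (by simp [ha]), ha]
      rfl⟩ with hF
  have hinj : Function.Injective F := by
    intro h1 h2 heq
    funext ⟨j, hj⟩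
    have := congrArg (fun r => r.1 j) heq
    simpa [hF, dif_pos hj] using this
  have := Fintype.card_le_of_injective F hinj
  rwa [Fintype.card_fun, Fintype.card_fin, hcardS, Fintype.card_subtype] at this

lemma exists_good_row {k v t : ℕ} (hv : 0 < v) (htk : t ≤ k)
    (U : Finset (Fin k → Option (Fin v)))
    (hval : ∀ g ∈ U, (Finset.univ.filter fun j => g j ≠ none).card = t) :
    ∃ r : Fin k → Fin v, U.card ≤ v ^ t * (U.filter fun g => CoversRow r g).card := by
  by_contra hcon
  push_neg at hcon
  -- sum over rows
  have hswap : ∑ r : Fin k → Fin v, (U.filter fun g => CoversRow r g).card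
      = ∑ g ∈ U, (Finset.univ.filter fun r : Fin k → Fin v => CoversRow r g).card := by
    simp only [Finset.card_filter]
    rw [Finset.sum_comm]
  have hlow : U.card * v ^ (k - t) ≤
      ∑ r : Fin k → Fin v, (U.filter fun g => CoversRow r g).card := by
    rw [hswap]
    calc U.card * v ^ (k - t) = ∑ _g ∈ U, v ^ (k - t) := by
          rw [Finset.sum_const, smul_eq_mul]
      _ ≤ _ := Finset.sum_le_sum fun g hg =>
          card_covering_rows_ge hv htk g (hval g hg)
  have hne : (Finset.univ : Finset (Fin k → Fin v)).Nonempty := @Finset.univ_nonempty _ _ ⟨fun _ => ⟨0, hv⟩⟩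
  have hstrict : ∑ r : Fin k → Fin v, v ^ t * (U.filter fun g => CoversRow r g).card
      < ∑ _r : Fin k → Fin v, U.card :=
    Finset.sum_lt_sum_of_nonempty hne fun r _ => hcon r
  rw [← Finset.mul_sum, Finset.sum_const, Finset.card_univ, Fintype.card_fun,
    Fintype.card_fin, Fintype.card_fin, smul_eq_mul] at hstrict
  have : v ^ t * (U.card * v ^ (k - t)) ≤ v ^ t * ∑ r : Fin k → Fin v,
      (U.filter fun g => CoversRow r g).card := Nat.mul_le_mul_left _ hlow
  have hk : v ^ t * v ^ (k - t) = v ^ k := by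
    rw [← pow_add]; congr 1; omega
  nlinarith [this, hstrict]

lemma card_constraints_le (k v t : ℕ) (htk : t ≤ k) (hv' : 0 < v) :
    ((Finset.univ : Finset (Fin k → Option (Fin v))).filter
      (fun g => (Finset.univ.filter fun j => g j ≠ none).card = t)).card
      ≤ k.choose t * v ^ t := by
  classical
  obtain ⟨s₀, _, hs₀⟩ := Finset.exists_subset_card_eq
    (s := (Finset.univ : Finset (Fin k))) (n := t) (by simpa using htk)
  set Φ : (Fin k → Option (Fin v)) → {s : Finset (Fin k) // s.card = t} × (Fin t → Fin v) :=
    fun g =>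
      if h : (Finset.univ.filter fun j => g j ≠ none).card = t then
        (⟨_, h⟩, fun i =>
          (g ((Finset.univ.filter fun j => g j ≠ none).orderEmbOfFin h i)).getD ⟨0, hv'⟩)
      else (⟨s₀, hs₀⟩, fun _ => ⟨0, hv'⟩) with hΦ
  have hinjOn : Set.InjOn Φ ((Finset.univ : Finset (Fin k → Option (Fin v))).filter
      (fun g => (Finset.univ.filter fun j => g j ≠ none).card = t)) := ?_
  · have hcard : ((Finset.univ : Finset (Fin k → Option (Fin v))).filter
        (fun g => (Finset.univ.filter fun j => g j ≠ none).card = t)).card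
        ≤ (Finset.univ : Finset ({s : Finset (Fin k) // s.card = t} × (Fin t → Fin v))).card :=
      Finset.card_le_card_of_injOn Φ (fun g _ => Finset.mem_univ _) hinjOn
    calc ((Finset.univ : Finset (Fin k → Option (Fin v))).filter
        (fun g => (Finset.univ.filter fun j => g j ≠ none).card = t)).card
        ≤ (Finset.univ : Finset ({s : Finset (Fin k) // s.card = t} × (Fin t → Fin v))).card :=
          hcard
      _ = k.choose t * v ^ t := by
          rw [Finset.card_univ, Fintype.card_prod, Fintype.card_finset_len,
            Fintype.card_fun, Fintype.card_fin, Fintype.card_fin, Fintype.card_fin]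
  · intro g1 h1 g2 h2 heq
    simp only [Finset.coe_filter, Set.mem_setOf_eq, Finset.mem_univ, true_and] at h1 h2
    rw [hΦ] at heq
    simp only [dif_pos h1, dif_pos h2, Prod.mk.injEq, Subtype.mk.injEq] at heq
    obtain ⟨hs, hf⟩ := heq
    -- the two order embeddings agree
    have hemb : ((Finset.univ.filter fun j => g2 j ≠ none).orderEmbOfFin h2 : Fin t ↪o Fin k)
        = (Finset.univ.filter fun j => g1 j ≠ none).orderEmbOfFin h1 := by
      apply Finset.orderEmbOfFin_unique' h1
      intro i
      rw [hs]
      exact Finset.orderEmbOfFin_mem _ h2 i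
    funext j
    by_cases hj : g1 j ≠ none
    · have hjmem : j ∈ (Finset.univ.filter fun j => g1 j ≠ none) := by simp [hj]
      obtain ⟨i, hi⟩ : ∃ i, (Finset.univ.filter fun j => g1 j ≠ none).orderEmbOfFin h1 i = j := by
        have := Finset.range_orderEmbOfFin (Finset.univ.filter fun j => g1 j ≠ none) h1
        have : j ∈ Set.range ⇑((Finset.univ.filter fun j => g1 j ≠ none).orderEmbOfFin h1) := by
          rw [this]; exact_mod_cast hjmem
        exact this
      have hval := congrFun hf i
      rw [hi] at hval
      have h2i : (Finset.univ.filter fun j => g2 j ≠ none).orderEmbOfFin h2 i = j := by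
        rw [show ((Finset.univ.filter fun j => g2 j ≠ none).orderEmbOfFin h2) i
            = ((Finset.univ.filter fun j => g1 j ≠ none).orderEmbOfFin h1) i from by rw [hemb]]
        exact hi
      rw [h2i] at hval
      have hj2 : g2 j ≠ none := by
        have : j ∈ (Finset.univ.filter fun j => g2 j ≠ none) := by rw [← hs]; exact hjmem
        simpa using this
      obtain ⟨a1, ha1⟩ := Option.ne_none_iff_exists'.mp hj
      obtain ⟨a2, ha2⟩ := Option.ne_none_iff_exists'.mp hj2
      rw [ha1, ha2]
      rw [ha1, ha2] at hval
      simpa using hval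
    · push_neg at hj
      have hj2 : g2 j = none := by
        by_contra hc
        have : j ∈ (Finset.univ.filter fun j => g1 j ≠ none) := by
          rw [hs]; simp [hc]
        simp [hj] at this
      rw [hj, hj2]

lemma slj_arith (x u u' : ℕ) (hx : 4 ≤ x) (hu : 2 ≤ u) (h : x * u' ≤ (x - 1) * u) :
    x * (if u' ≤ 1 then 3 else 2 * u') ≤ (x - 1) * (if u ≤ 1 then 3 else 2 * u) := by
  obtain ⟨y, rfl⟩ : ∃ y, x = y + 4 := ⟨x - 4, by omega⟩
  have h4 : y + 4 - 1 = y + 3 := by omega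
  rw [h4] at h ⊢
  rw [if_neg (by omega : ¬ u ≤ 1)]
  by_cases h1 : u' ≤ 1
  · rw [if_pos h1]
    nlinarith
  · rw [if_neg h1]
    nlinarith

lemma slj_sub (x u u' c : ℕ) (hx : 1 ≤ x) (h1 : u ≤ x * c) (h2 : u' + c = u) :
    x * u' ≤ (x - 1) * u := by
  have hA : x * u' + u ≤ x * u := by
    calc x * u' + u ≤ x * u' + x * c := Nat.add_le_add_left h1 _
      _ = x * u := by rw [← Nat.mul_add, h2]
  have hB : (x - 1) * u + u = x * u := by
    rw [tsub_mul, one_mul, Nat.sub_add_cancel (Nat.le_mul_of_pos_left u (by omega))]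
  omega

lemma greedy_key {k v t : ℕ} (htk : t ≤ k) (hv : 0 < v) (hx : 4 ≤ v ^ t) :
    ∀ u (U : Finset (Fin k → Option (Fin v))), U.card = u →
    (∀ g ∈ U, (Finset.univ.filter fun j => g j ≠ none).card = t) →
    ∃ (N : ℕ) (rows : Fin N → Fin k → Fin v),
      (∀ g ∈ U, ∃ r, CoversRow (rows r) g) ∧
      2 * (v ^ t) ^ N ≤ (if u ≤ 1 then 3 else 2 * u) * (v ^ t - 1) ^ N := by
  intro u
  induction u using Nat.strong_induction_on with
  | _ u IH =>
  intro U hcard hval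
  set x := v ^ t with hxdef
  rcases Nat.eq_zero_or_pos u with hu0 | hupos
  · subst hu0
    refine ⟨0, Fin.elim0, fun g hg => absurd hg ?_, by norm_num⟩
    simp [Finset.card_eq_zero.mp hcard]
  rcases eq_or_lt_of_le (show 1 ≤ u from hupos) with hu1 | hu2
  · -- u = 1
    obtain ⟨g0, hg0⟩ := Finset.card_eq_one.mp (hcard.trans hu1.symm)
    refine ⟨1, fun _ => fun j => (g0 j).getD ⟨0, hv⟩, ?_, ?_⟩
    · intro g hg
      rw [hg0, Finset.mem_singleton] at hg
      subst hg
      exact ⟨0, fun j a ha => by simp [ha]⟩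
    · rw [if_pos (le_of_eq hu1.symm)]
      simp only [pow_one]
      omega
  -- u ≥ 2
  obtain ⟨r0, hr0⟩ := exists_good_row hv htk U hval
  set U' := U.filter (fun g => ¬ CoversRow r0 g) with hU'
  set u' := U'.card with hu'def
  have hsplit : (U.filter fun g => CoversRow r0 g).card + u' = u := by
    rw [hu'def, hU', hcard.symm]
    exact Finset.card_filter_add_card_filter_not _
  have hr0' : u ≤ x * (U.filter fun g => CoversRow r0 g).card := hcard ▸ hr0
  have hcov_pos : 1 ≤ (U.filter fun g => CoversRow r0 g).card := by
    rcases Nat.eq_zero_or_pos (U.filter fun g => CoversRow r0 g).card with h | h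
    · rw [h, Nat.mul_zero] at hr0'; omega
    · exact h
  have hu'lt : u' < u := by omega
  have hxu' : x * u' ≤ (x - 1) * u :=
    slj_sub x u u' _ (by omega) hr0' (by omega)
  obtain ⟨N', rows', hcov', hineq'⟩ := IH u' hu'lt U' rfl
    (fun g hg => hval g (Finset.mem_of_mem_filter g hg))
  refine ⟨N' + 1, Fin.cons r0 rows', ?_, ?_⟩
  · intro g hg
    by_cases hc : CoversRow r0 g
    · exact ⟨0, by rwa [Fin.cons_zero]⟩
    · obtain ⟨r, hr⟩ := hcov' g (by rw [hU']; exact Finset.mem_filter.mpr ⟨hg, hc⟩)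
      exact ⟨r.succ, by rwa [Fin.cons_succ]⟩
  · have hustep := slj_arith x u u' hx (by omega) hxu'
    calc 2 * x ^ (N' + 1) = x * (2 * x ^ N') := by ring
      _ ≤ x * ((if u' ≤ 1 then 3 else 2 * u') * (x - 1) ^ N') := Nat.mul_le_mul_left _ hineq'
      _ = (x * (if u' ≤ 1 then 3 else 2 * u')) * (x - 1) ^ N' := by ring
      _ ≤ ((x - 1) * (if u ≤ 1 then 3 else 2 * u)) * (x - 1) ^ N' :=
          Nat.mul_le_mul_right _ hustep
      _ = (if u ≤ 1 then 3 else 2 * u) * (x - 1) ^ (N' + 1) := by ring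

/-- Stein–Lovász–Johnson bound: for `k ≥ t ≥ 2`, `v ≥ 2` there is a covering array
`CA(N; t, k, v)` with `N ≤ (log C(k,t) + t log v) / log (v^t/(v^t − 1))`. -/
theorem stein_lovasz_johnson (t k v : ℕ) (ht : 2 ≤ t) (htk : t ≤ k) (hv : 2 ≤ v) :
    ∃ (N : ℕ) (A : Fin N → Fin k → Fin v), IsCoveringArray t A ∧
      (N : ℝ) ≤ (Real.log (k.choose t) + t * Real.log v) /
        Real.log ((v : ℝ) ^ t / ((v : ℝ) ^ t - 1)) := by
  have hv0 : 0 < v := by omega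
  have hx4 : 4 ≤ v ^ t := by
    calc (4 : ℕ) = 2 ^ 2 := rfl
      _ ≤ 2 ^ t := Nat.pow_le_pow_right (by norm_num) ht
      _ ≤ v ^ t := Nat.pow_le_pow_left hv t
  set Ufull := ((Finset.univ : Finset (Fin k → Option (Fin v))).filter
    (fun g => (Finset.univ.filter fun j => g j ≠ none).card = t)) with hUfull
  obtain ⟨N, rows, hcov, hineq⟩ := greedy_key htk hv0 hx4 Ufull.card Ufull rfl
    (fun g hg => (Finset.mem_filter.mp hg).2)
  refine ⟨N, rows, ?_, ?_⟩
  · -- covering array property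
    intro c hc a
    set g : Fin k → Option (Fin v) :=
      fun j => if h : ∃ i, c i = j then some (a h.choose) else none with hg
    have hgmem : g ∈ Ufull := by
      rw [hUfull, Finset.mem_filter]
      refine ⟨Finset.mem_univ _, ?_⟩
      have hset : (Finset.univ.filter fun j => g j ≠ none) = Finset.univ.image c := by
        ext j
        simp only [Finset.mem_filter, Finset.mem_univ, true_and, Finset.mem_image]
        by_cases h : ∃ i, c i = j
        · simpa [hg, dif_pos h] using h
        · simpa [hg, dif_neg h] using h
      rw [hset, Finset.card_image_of_injective _ hc, Finset.card_univ, Fintype.card_fin]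
    obtain ⟨r, hr⟩ := hcov g hgmem
    refine ⟨r, fun i => ?_⟩
    apply hr
    have hex : ∃ i', c i' = c i := ⟨i, rfl⟩
    rw [hg]
    simp only [dif_pos hex]
    congr 1
    exact congrArg a (hc hex.choose_spec)
  · -- the numeric bound
    have hch : 0 < k.choose t := Nat.choose_pos htk
    have hM : Ufull.card ≤ k.choose t * v ^ t := card_constraints_le k v t htk hv0
    have hM2 : 2 ≤ k.choose t * v ^ t := le_trans (by omega) (Nat.le_mul_of_pos_left _ hch)
    have hifle : (if Ufull.card ≤ 1 then 3 else 2 * Ufull.card) ≤ 2 * (k.choose t * v ^ t) := by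
      split <;> omega
    have hnat : (v ^ t) ^ N ≤ (k.choose t * v ^ t) * (v ^ t - 1) ^ N := by
      have := le_trans hineq (Nat.mul_le_mul_right _ hifle)
      have h2 : 2 * ((v ^ t) ^ N) ≤ 2 * ((k.choose t * v ^ t) * (v ^ t - 1) ^ N) := by
        calc 2 * ((v ^ t) ^ N) ≤ (2 * (k.choose t * v ^ t)) * (v ^ t - 1) ^ N := this
          _ = 2 * ((k.choose t * v ^ t) * (v ^ t - 1) ^ N) := by ring
      omega
    -- move to the reals
    set X : ℝ := (v : ℝ) ^ t with hX
    have hX4 : (4 : ℝ) ≤ X := by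
      rw [hX]
      calc (4 : ℝ) = ((4 : ℕ) : ℝ) := by norm_num
        _ ≤ ((v ^ t : ℕ) : ℝ) := by exact_mod_cast hx4
        _ = (v : ℝ) ^ t := by push_cast; ring
    have hX1 : (1 : ℝ) < X := by linarith
    have hXm1 : (0 : ℝ) < X - 1 := by linarith
    have hreal : X ^ N ≤ (k.choose t * v ^ t : ℕ) * (X - 1) ^ N := by
      have hcast : ((v ^ t - 1 : ℕ) : ℝ) = X - 1 := by
        rw [Nat.cast_sub (by omega : 1 ≤ v ^ t)]
        push_cast [hX]; ring
      calc X ^ N = (((v ^ t) ^ N : ℕ) : ℝ) := by push_cast [hX]; ring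
        _ ≤ (((k.choose t * v ^ t) * (v ^ t - 1) ^ N : ℕ) : ℝ) := by exact_mod_cast hnat
        _ = (k.choose t * v ^ t : ℕ) * (X - 1) ^ N := by
            push_cast [hcast]
            ring
    have hRgt1 : (1 : ℝ) < X / (X - 1) := (one_lt_div hXm1).mpr (by linarith)
    have hlogR : 0 < Real.log (X / (X - 1)) := Real.log_pos hRgt1
    rw [le_div_iff₀ hlogR]
    have hRpow : (X / (X - 1)) ^ N ≤ ((k.choose t * v ^ t : ℕ) : ℝ) := by
      rw [div_pow, div_le_iff₀ (by positivity)]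
      exact hreal
    have hRpos : (0 : ℝ) < (X / (X - 1)) ^ N := by positivity
    calc (N : ℝ) * Real.log (X / (X - 1)) = Real.log ((X / (X - 1)) ^ N) := by
          rw [Real.log_pow]
      _ ≤ Real.log ((k.choose t * v ^ t : ℕ) : ℝ) := Real.log_le_log hRpos hRpow
      _ = Real.log (k.choose t) + t * Real.log v := by
          push_cast
          rw [Real.log_mul (by positivity) (by positivity), Real.log_pow]
end

section
/- Let t, k, v be integers with k ≥ 2t, t ≥ 2, v ≥ 2; set η = C(k,t) and ρ = C(k,t) − C(k−t,t). If η·v^t·log(v^t/(v^t−1))/ρ ≤ v^t, then CAN(t,k,v) ≤ (log(C(k,t)) + t·log v + log log(v^t/(v^t−1)) + 2)/log(v^t/(v^t−1)) − η/ρ. (LLL-based two-stage bound.) -/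
open scoped Classical

/-- `CAN t k v` is the minimum number of rows of a covering array `CA(N; t, k, v)`. -/
noncomputable def CAN (t k v : ℕ) : ℕ :=
  sInf {N : ℕ | ∃ A : Fin N → Fin k → Fin v, IsCoveringArray t A}

open Finset


lemma exp_neg_le (z : ℝ) (hz : 0 ≤ z) : Real.exp (-z) ≤ 1 - z + (3/4) * z^2 := by
  have h1 : (1 + z/2) ≤ Real.exp (z/2) := by
    have := Real.add_one_le_exp (z/2); linarith
  have h2 : (1 + z/2)^2 ≤ Real.exp z := by
    have hp : (0:ℝ) ≤ 1 + z/2 := by linarith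
    calc (1 + z/2)^2 ≤ (Real.exp (z/2))^2 := by
          exact pow_le_pow_left₀ hp h1 2
      _ = Real.exp z := by rw [sq, ← Real.exp_add]; ring_nf
  have hpos : (0:ℝ) < (1 + z/2)^2 := by positivity
  have h3 : Real.exp (-z) ≤ ((1 + z/2)^2)⁻¹ := by
    rw [Real.exp_neg]
    exact inv_anti₀ hpos h2
  have h5 : 1 ≤ (1 - z + (3/4)*z^2) * (1+z/2)^2 := by nlinarith [pow_nonneg hz 3, pow_nonneg hz 4]
  have h4 : ((1 + z/2)^2)⁻¹ ≤ 1 - z + (3/4) * z^2 := by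
    rw [inv_eq_one_div, div_le_iff₀ hpos]
    linarith
  linarith

lemma analytic_core (η ρ V : ℝ) (hV : 4 ≤ V) (hη : 2 ≤ η) (hρ : 0 < ρ)
    (hh : η * Real.log (V/(V-1)) ≤ ρ) :
    ∃ j : ℕ, 2 + (j:ℝ) + η*(V-2)*((V-1)/V)^j ≤
      (Real.log η + Real.log V + Real.log (Real.log (V/(V-1))) + 2) / (Real.log (V/(V-1))) - η/ρ := by
  have hV0 : (0:ℝ) < V := by linarith
  have hV1 : (0:ℝ) < V - 1 := by linarith
  have hV2 : (0:ℝ) < V - 2 := by linarith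
  set L := Real.log (V/(V-1)) with hLdef
  have hrat : (1:ℝ) < V/(V-1) := by rw [lt_div_iff₀ hV1]; linarith
  have hL0 : 0 < L := Real.log_pos hrat
  have hLub : L ≤ 1/(V-1) := by
    have h1 := Real.log_le_sub_one_of_pos (show (0:ℝ) < V/(V-1) by positivity)
    have heq : V/(V-1) - 1 = 1/(V-1) := by field_simp; ring
    rw [heq] at h1; exact h1
  have hLlb : 1/V ≤ L := by
    have h1 := Real.log_le_sub_one_of_pos (show (0:ℝ) < (V-1)/V by positivity)
    have h2 : Real.log ((V-1)/V) = -L := by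
      rw [hLdef, ← Real.log_inv]; congr 1; field_simp
    have h3 : (V-1)/V - 1 = -(1/V) := by field_simp; ring
    rw [h2, h3] at h1; linarith
  have hEL1 : 1 ≤ η*(V-2)*L := by
    have h1 : V/2 ≤ V - 2 := by linarith
    have h2 : 2 * (V/2) * (1/V) ≤ η*(V-2)*L := by
      apply mul_le_mul (mul_le_mul hη h1 (by positivity) (by linarith)) hLlb (by positivity)
      positivity
    have hs : 2 * (V/2) * (1/V) = 1 := by field_simp
    linarith [hs ▸ h2]
  set J := Real.log (η*(V-2)*L) / L with hJdef
  have hJ0 : 0 ≤ J := div_nonneg (Real.log_nonneg hEL1) (le_of_lt hL0)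
  refine ⟨⌈J⌉₊, ?_⟩
  set j : ℕ := ⌈J⌉₊ with hjdef
  set δ : ℝ := (j:ℝ) - J with hδdef
  have hδ0 : 0 ≤ δ := by simp only [hδdef]; linarith [Nat.le_ceil J]
  have hδ1 : δ ≤ 1 := by
    simp only [hδdef, hjdef]
    have := Nat.ceil_lt_add_one hJ0
    linarith
  have hbase : (V-1)/V = Real.exp (-L) := by
    rw [hLdef, ← Real.log_inv, Real.exp_log (by positivity)]
    congr 1; field_simp
  have hηV2 : η*(V-2) = Real.exp (J*L) / L := by
    have hx : Real.exp (J*L) = η*(V-2)*L := by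
      rw [hJdef, div_mul_cancel₀ _ (ne_of_gt hL0)]
      exact Real.exp_log (by nlinarith)
    rw [hx]; field_simp
  have hterm : η*(V-2)*((V-1)/V)^j = Real.exp (-δ*L) / L := by
    rw [hbase, ← Real.exp_nat_mul, hηV2, hδdef]
    rw [div_mul_eq_mul_div, ← Real.exp_add]
    ring_nf
  rw [hterm]
  have hrare : η/ρ ≤ 1/L := by
    rw [div_le_div_iff₀ hρ hL0]
    linarith [hh]
  have hlogsplit : Real.log η + Real.log V + Real.log L = Real.log (η*(V-2)*L) + Real.log (V/(V-2)) := by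
    rw [show η*(V-2)*L = η*((V-2)*L) by ring]
    rw [Real.log_mul (by positivity) (by positivity), Real.log_mul (by positivity) (ne_of_gt hL0),
        Real.log_div (ne_of_gt hV0) (ne_of_gt hV2)]
    ring
  set W := Real.log (V/(V-2)) with hWdef
  have hW : 2*L + L^2 ≤ W := by
    have hfact : V/(V-2) = (V/(V-1))^2 * ((V-1)^2/(V*(V-2))) := by
      field_simp
    have hWeq : W = 2*L + Real.log ((V-1)^2/(V*(V-2))) := by
      rw [hWdef, hfact, Real.log_mul (by positivity) (by positivity), Real.log_pow, hLdef]
      push_cast; ring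
    have hlb : 1/(V-1)^2 ≤ Real.log ((V-1)^2/(V*(V-2))) := by
      have h1 := Real.log_le_sub_one_of_pos (show (0:ℝ) < V*(V-2)/(V-1)^2 by positivity)
      have h2 : Real.log (V*(V-2)/(V-1)^2) = - Real.log ((V-1)^2/(V*(V-2))) := by
        rw [← Real.log_inv]; congr 1; field_simp
      have h3 : V*(V-2)/(V-1)^2 - 1 = -(1/(V-1)^2) := by field_simp; ring
      rw [h2, h3] at h1; linarith
    have hL2 : L^2 ≤ 1/(V-1)^2 := by
      have hx : L^2 ≤ (1/(V-1))^2 := pow_le_pow_left₀ (le_of_lt hL0) hLub 2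
      have hy : (1/(V-1))^2 = 1/(V-1)^2 := by field_simp
      linarith [hy ▸ hx]
    linarith
  clear_value L J j δ W
  have hexp : Real.exp (-δ*L) ≤ 1 - δ*L + (3/4)*(δ*L)^2 := by
    have := exp_neg_le (δ*L) (mul_nonneg hδ0 hL0.le)
    simpa [neg_mul] using this
  have hδL : δ*L ≤ L := by nlinarith
  have hδL2 : (δ*L)^2 ≤ L^2 := pow_le_pow_left₀ (mul_nonneg hδ0 hL0.le) hδL 2
  have hkey : 2*L + δ*L + Real.exp (-δ*L) ≤ W + 1 := by
    linarith only [hexp, hδL2, hW, sq_nonneg L, hδ0, hL0.le, mul_nonneg hδ0 hL0.le]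
  -- final
  rw [hlogsplit]
  have hjeq : (j:ℝ) = J + δ := by rw [hδdef]; ring
  rw [hjeq]
  have hkey' : Real.exp (-δ*L) ≤ W + 1 - 2*L - δ*L := by linarith
  have h1 : Real.exp (-δ*L)/L ≤ (W + 1 - 2*L - δ*L)/L := by
    exact div_le_div_of_nonneg_right hkey' hL0.le
  have hLne : L ≠ 0 := hL0.ne'
  have hexpand : (W + 1 - 2*L - δ*L)/L = W/L + 1/L - 2 - δ := by
    field_simp
  have hRHS : (Real.log (η*(V-2)*L) + W + 2)/L = J + W/L + 2/L := by
    rw [hJdef]; ring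
  have h2L : 2/L = 1/L + 1/L := by ring
  rw [hRHS]
  linarith [h1, hexpand, hrare]


lemma card_match {k v t : ℕ} (e : Fin t → Fin k) (he : Function.Injective e) (q : Fin t → Fin v) :
    (Finset.univ.filter (fun f : Fin k → Fin v => ∀ i, f (e i) = q i)).card = v ^ (k - t) := by
  have htk : t ≤ k := by
    have := Fintype.card_le_of_injective e he
    simpa using this
  have hset : Finset.univ.filter (fun f : Fin k → Fin v => ∀ i, f (e i) = q i)
      = Fintype.piFinset (fun x : Fin k =>
          if h : ∃ i, e i = x then ({q h.choose} : Finset (Fin v)) else Finset.univ) := by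
    ext f
    simp only [Finset.mem_filter, Finset.mem_univ, true_and, Fintype.mem_piFinset]
    constructor
    · intro hf x
      by_cases h : ∃ i, e i = x
      · rw [dif_pos h, Finset.mem_singleton]
        exact (congrArg f h.choose_spec.symm).trans (hf h.choose)
      · rw [dif_neg h]; exact Finset.mem_univ _
    · intro hf i
      have h : ∃ i', e i' = e i := ⟨i, rfl⟩
      have h2 := hf (e i)
      rw [dif_pos h, Finset.mem_singleton] at h2
      rw [h2, he h.choose_spec]
  rw [hset, Fintype.card_piFinset]
  have hprod : ∀ x : Fin k,
      (if h : ∃ i, e i = x then ({q h.choose} : Finset (Fin v)) else Finset.univ).card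
      = if (∃ i, e i = x) then 1 else v := by
    intro x
    by_cases h : ∃ i, e i = x
    · rw [dif_pos h, if_pos h, Finset.card_singleton]
    · rw [dif_neg h, if_neg h, Finset.card_univ, Fintype.card_fin]
  rw [Finset.prod_congr rfl (fun x _ => hprod x), Finset.prod_ite (fun _ => (1:ℕ)) (fun _ => v)]
  rw [Finset.prod_const, Finset.prod_const, one_pow, one_mul]
  congr 1
  have himg : Finset.univ.filter (fun x : Fin k => ∃ i, e i = x) = Finset.univ.image e := by
    ext x; simp [eq_comm]
  have hc1 : (Finset.univ.filter (fun x : Fin k => ∃ i, e i = x)).card = t := by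
    rw [himg, Finset.card_image_of_injective _ he, Finset.card_univ, Fintype.card_fin]
  have := Finset.card_filter_add_card_filter_not (s := (Finset.univ : Finset (Fin k)))
    (p := fun x => ∃ i, e i = x)
  rw [hc1] at this
  rw [Finset.card_univ, Fintype.card_fin] at this
  omega

lemma card_miss_pair {k v t : ℕ} (ht0 : 0 < t) (hV : 4 ≤ v^t)
    (e : Fin t → Fin k) (he : Function.Injective e) (b : Fin t → Fin v)
    (σ : Equiv.Perm (Fin v)) (hσ : ∀ a, σ a ≠ a) :
    (Finset.univ.filter (fun f : Fin k → Fin v =>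
        (¬ ∀ i, f (e i) = b i) ∧ ¬ ∀ i, σ (f (e i)) = b i)).card
      = v^k - 2 * v^(k-t) := by
  have htk : t ≤ k := by
    have := Fintype.card_le_of_injective e he
    simpa using this
  have hpred : ∀ f : Fin k → Fin v, (∀ i, σ (f (e i)) = b i) ↔ (∀ i, f (e i) = σ.symm (b i)) := by
    intro f
    exact forall_congr' fun i => Equiv.apply_eq_iff_eq_symm_apply σ
  have hsplit : Finset.univ.filter (fun f : Fin k → Fin v =>
        (¬ ∀ i, f (e i) = b i) ∧ ¬ ∀ i, σ (f (e i)) = b i)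
      = Finset.univ \ ((Finset.univ.filter (fun f : Fin k → Fin v => ∀ i, f (e i) = b i))
          ∪ (Finset.univ.filter (fun f : Fin k → Fin v => ∀ i, f (e i) = σ.symm (b i)))) := by
    ext f
    simp only [Finset.mem_filter, Finset.mem_univ, true_and, Finset.mem_sdiff, Finset.mem_union,
      hpred f]
    tauto
  rw [hsplit, Finset.card_sdiff_of_subset (Finset.subset_univ _)]
  have hdisj : Disjoint (Finset.univ.filter (fun f : Fin k → Fin v => ∀ i, f (e i) = b i))
      (Finset.univ.filter (fun f : Fin k → Fin v => ∀ i, f (e i) = σ.symm (b i))) := by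
    rw [Finset.disjoint_left]
    intro f hf1 hf2
    simp only [Finset.mem_filter, Finset.mem_univ, true_and] at hf1 hf2
    have i0 : Fin t := ⟨0, ht0⟩
    have h1 := hf1 i0
    have h2 := hf2 i0
    rw [h1] at h2
    have := hσ (σ.symm (b i0))
    rw [Equiv.apply_symm_apply] at this
    exact this (by rw [← h2])
  rw [Finset.card_union_of_disjoint hdisj, card_match e he b, card_match e he _]
  rw [Finset.card_univ, Fintype.card_fun, Fintype.card_fin, Fintype.card_fin]
  omega

lemma card_miss_one {k v t : ℕ}
    (e : Fin t → Fin k) (he : Function.Injective e) (b : Fin t → Fin v) :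
    (Finset.univ.filter (fun f : Fin k → Fin v => ¬ ∀ i, f (e i) = b i)).card
      = v^k - v^(k-t) := by
  rw [Finset.filter_not, Finset.card_sdiff_of_subset (Finset.filter_subset _ _), card_match e he b]
  rw [Finset.card_univ, Fintype.card_fun, Fintype.card_fin, Fintype.card_fin]

/-- Canonical interactions: a `t`-subset of columns with a target pattern. -/
def ICidx (t k v : ℕ) := {S : Finset (Fin k) // S.card = t} × (Fin t → Fin v)

noncomputable instance (t k v : ℕ) : Fintype (ICidx t k v) := by
  unfold ICidx; infer_instance

/-- The monotone enumeration of the columns of an interaction. -/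
def embIC {t k : ℕ} (S : {S : Finset (Fin k) // S.card = t}) : Fin t → Fin k :=
  S.1.orderEmbOfFin S.2

lemma embIC_inj {t k : ℕ} (S : {S : Finset (Fin k) // S.card = t}) :
    Function.Injective (embIC S) := (S.1.orderEmbOfFin S.2).injective

/-- `A` covers the canonical interaction `ic`. -/
def coversIC {t k v N : ℕ} (A : Fin N → Fin k → Fin v) (ic : ICidx t k v) : Prop :=
  ∃ r, ∀ i, A r (embIC ic.1 i) = ic.2 i

lemma card_ICidx (t k v : ℕ) :
    Fintype.card (ICidx t k v) = k.choose t * v^t := by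
  unfold ICidx
  rw [Fintype.card_prod, Fintype.card_fun, Fintype.card_fin, Fintype.card_fin]
  congr 1
  rw [Fintype.card_subtype]
  have : Finset.univ.filter (fun S : Finset (Fin k) => S.card = t) = Finset.univ.powersetCard t := by
    ext S; simp [Finset.mem_powersetCard_univ]
  rw [this, Finset.card_powersetCard, Finset.card_univ, Fintype.card_fin]

/-- The array built from a seed row (plus its shift) and `j` plain rows. -/
def ArrOf {k v : ℕ} (σ : Equiv.Perm (Fin v)) (j : ℕ) (ω : Fin (j+1) → Fin k → Fin v) :
    Fin (2+j) → Fin k → Fin v :=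
  fun r x =>
    if h0 : r.1 = 0 then ω 0 x
    else if h1 : r.1 = 1 then σ (ω 0 x)
    else ω ⟨r.1 - 1, by omega⟩ x

lemma miss_iff {t k v : ℕ} (σ : Equiv.Perm (Fin v)) (j : ℕ)
    (ω : Fin (j+1) → Fin k → Fin v) (ic : ICidx t k v) :
    (¬ coversIC (ArrOf σ j ω) ic) ↔
      ω ∈ Fintype.piFinset (fun m : Fin (j+1) =>
        if m = 0 then
          Finset.univ.filter (fun f : Fin k → Fin v =>
            (¬ ∀ i, f (embIC ic.1 i) = ic.2 i) ∧ ¬ ∀ i, σ (f (embIC ic.1 i)) = ic.2 i)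
        else
          Finset.univ.filter (fun f : Fin k → Fin v => ¬ ∀ i, f (embIC ic.1 i) = ic.2 i)) := by
  have hA0 : ∀ (h : (0:ℕ) < 2+j), ArrOf σ j ω ⟨0,h⟩ = ω 0 :=
    fun h => funext fun x => by unfold ArrOf; rw [dif_pos rfl]
  have hA1 : ∀ (h : (1:ℕ) < 2+j), ArrOf σ j ω ⟨1,h⟩ = fun x => σ (ω 0 x) :=
    fun h => funext fun x => by unfold ArrOf; norm_num
  have hAm : ∀ (r : Fin (2+j)) (hr : 2 ≤ r.1), ArrOf σ j ω r = ω ⟨r.1 - 1, by omega⟩ :=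
    fun r hr => funext fun x => by
      unfold ArrOf
      rw [dif_neg (by omega), dif_neg (by omega)]
  rw [Fintype.mem_piFinset]
  unfold coversIC
  constructor
  · intro hnc m
    by_cases hm : m = 0
    · subst hm
      rw [if_pos rfl, Finset.mem_filter]
      refine ⟨Finset.mem_univ _, ?_, ?_⟩
      · intro hall
        exact hnc ⟨⟨0, by omega⟩, by rw [hA0]; exact hall⟩
      · intro hall
        refine hnc ⟨⟨1, by omega⟩, ?_⟩
        rw [hA1]
        exact hall
    · rw [if_neg hm, Finset.mem_filter]
      refine ⟨Finset.mem_univ _, ?_⟩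
      have hm1 : 1 ≤ m.1 := by
        rcases Nat.eq_zero_or_pos m.1 with h | h
        · exact absurd (Fin.ext h) hm
        · omega
      intro hall
      refine hnc ⟨⟨m.1 + 1, by omega⟩, ?_⟩
      rw [hAm ⟨m.1 + 1, by omega⟩ (by simp; omega)]
      have : (⟨m.1 + 1 - 1, by omega⟩ : Fin (j+1)) = m := Fin.ext (by simp)
      rw [this]
      exact hall
  · rintro hω ⟨r, hr⟩
    have h0 := hω 0
    rw [if_pos rfl, Finset.mem_filter] at h0
    by_cases hr0 : r.1 = 0
    · have : r = ⟨0, by omega⟩ := Fin.ext hr0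
      rw [this, hA0] at hr
      exact h0.2.1 hr
    · by_cases hr1 : r.1 = 1
      · have : r = ⟨1, by omega⟩ := Fin.ext hr1
        rw [this, hA1] at hr
        exact h0.2.2 hr
      · have hr2 : 2 ≤ r.1 := by omega
        have hm := hω ⟨r.1 - 1, by omega⟩
        have hne : (⟨r.1 - 1, by omega⟩ : Fin (j+1)) ≠ 0 := by
          intro hc
          have := congrArg Fin.val hc
          simp at this
          omega
        rw [if_neg hne, Finset.mem_filter] at hm
        rw [hAm r hr2] at hr
        exact hm.2 hr

set_option maxHeartbeats 1000000 in
lemma exists_low_miss {t k v : ℕ} (ht0 : 0 < t) (htk : t ≤ k) (hv : 2 ≤ v) (hV : 4 ≤ v^t)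
    (σ : Equiv.Perm (Fin v)) (hσ : ∀ a, σ a ≠ a) (j : ℕ) :
    ∃ ω : Fin (j+1) → Fin k → Fin v,
      (Finset.univ.filter (fun ic : ICidx t k v => ¬ coversIC (ArrOf σ j ω) ic)).card
          * (v^k)^(j+1)
        ≤ (k.choose t * v^t) * ((v^k - 2*v^(k-t)) * (v^k - v^(k-t))^j) := by
  set F := fun ω : Fin (j+1) → Fin k → Fin v =>
    (Finset.univ.filter (fun ic : ICidx t k v => ¬ coversIC (ArrOf σ j ω) ic)).card with hF
  -- total count
  have hBadcard : ∀ ic : ICidx t k v,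
      (Finset.univ.filter (fun ω : Fin (j+1) → Fin k → Fin v =>
          ¬ coversIC (ArrOf σ j ω) ic)).card
        = (v^k - 2*v^(k-t)) * (v^k - v^(k-t))^j := by
    intro ic
    have hset : Finset.univ.filter (fun ω : Fin (j+1) → Fin k → Fin v =>
          ¬ coversIC (ArrOf σ j ω) ic)
        = Fintype.piFinset (fun m : Fin (j+1) =>
            if m = 0 then
              Finset.univ.filter (fun f : Fin k → Fin v =>
                (¬ ∀ i, f (embIC ic.1 i) = ic.2 i) ∧ ¬ ∀ i, σ (f (embIC ic.1 i)) = ic.2 i)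
            else
              Finset.univ.filter (fun f : Fin k → Fin v => ¬ ∀ i, f (embIC ic.1 i) = ic.2 i)) := by
      ext ω
      rw [Finset.mem_filter]
      simp only [Finset.mem_univ, true_and]
      exact miss_iff σ j ω ic
    rw [hset, Fintype.card_piFinset, Fin.prod_univ_succ]
    rw [if_pos rfl]
    have hrest : ∀ i : Fin j, ((if (i.succ : Fin (j+1)) = 0 then
              Finset.univ.filter (fun f : Fin k → Fin v =>
                (¬ ∀ i, f (embIC ic.1 i) = ic.2 i) ∧ ¬ ∀ i, σ (f (embIC ic.1 i)) = ic.2 i)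
            else
              Finset.univ.filter (fun f : Fin k → Fin v => ¬ ∀ i, f (embIC ic.1 i) = ic.2 i))).card
          = v^k - v^(k-t) := by
      intro i
      rw [if_neg (Fin.succ_ne_zero i), card_miss_one (embIC ic.1) (embIC_inj ic.1) ic.2]
    rw [Finset.prod_congr rfl (fun i _ => hrest i), Finset.prod_const, Finset.card_univ,
      Fintype.card_fin]
    rw [card_miss_pair ht0 hV (embIC ic.1) (embIC_inj ic.1) ic.2 σ hσ]
  have htotal : ∑ ω : Fin (j+1) → Fin k → Fin v, F ω
      = (k.choose t * v^t) * ((v^k - 2*v^(k-t)) * (v^k - v^(k-t))^j) := by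
    have h1 : ∀ ω, F ω = ∑ ic : ICidx t k v, if ¬ coversIC (ArrOf σ j ω) ic then 1 else 0 :=
      fun ω => Finset.card_filter _ _
    calc ∑ ω : Fin (j+1) → Fin k → Fin v, F ω
        = ∑ ω : Fin (j+1) → Fin k → Fin v, ∑ ic : ICidx t k v,
            if ¬ coversIC (ArrOf σ j ω) ic then 1 else 0 := Finset.sum_congr rfl (fun ω _ => h1 ω)
      _ = ∑ ic : ICidx t k v, ∑ ω : Fin (j+1) → Fin k → Fin v,
            if ¬ coversIC (ArrOf σ j ω) ic then 1 else 0 := Finset.sum_comm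
      _ = ∑ ic : ICidx t k v, (Finset.univ.filter (fun ω : Fin (j+1) → Fin k → Fin v =>
            ¬ coversIC (ArrOf σ j ω) ic)).card := by
          refine Finset.sum_congr rfl (fun ic _ => ?_)
          rw [Finset.card_filter]
      _ = ∑ _ic : ICidx t k v, (v^k - 2*v^(k-t)) * (v^k - v^(k-t))^j :=
          Finset.sum_congr rfl (fun ic _ => hBadcard ic)
      _ = (k.choose t * v^t) * ((v^k - 2*v^(k-t)) * (v^k - v^(k-t))^j) := by
          rw [Finset.sum_const, Finset.card_univ, card_ICidx, smul_eq_mul]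
  -- pick a minimizer
  have hne : (Finset.univ : Finset (Fin (j+1) → Fin k → Fin v)).Nonempty := by
    refine ⟨fun _ _ => ⟨0, by omega⟩, Finset.mem_univ _⟩
  obtain ⟨ω, -, hmin⟩ := Finset.exists_min_image Finset.univ F hne
  refine ⟨ω, ?_⟩
  have hsum : Finset.univ.card • F ω ≤ ∑ ω' : Fin (j+1) → Fin k → Fin v, F ω' :=
    Finset.card_nsmul_le_sum Finset.univ F (F ω) (fun x _ => hmin x (Finset.mem_univ x))
  have hcard : Fintype.card (Fin (j+1) → Fin k → Fin v) = (v^k)^(j+1) := by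
    rw [Fintype.card_fun, Fintype.card_fun, Fintype.card_fin, Fintype.card_fin, Fintype.card_fin]
  rw [Finset.card_univ, hcard, smul_eq_mul, htotal] at hsum
  calc F ω * (v^k)^(j+1) = (v^k)^(j+1) * F ω := by ring
    _ ≤ _ := hsum

/-- If all canonical interactions are covered then `A` is a covering array. -/
lemma isCoveringArray_of_canonical {t k v N : ℕ} (A : Fin N → Fin k → Fin v)
    (hA : ∀ ic : ICidx t k v, coversIC A ic) : IsCoveringArray t A := by
  intro c hc a
  have hS : (Finset.univ.image c).card = t := by
    rw [Finset.card_image_of_injective _ hc, Finset.card_univ, Fintype.card_fin]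
  set S : {S : Finset (Fin k) // S.card = t} := ⟨Finset.univ.image c, hS⟩ with hSdef
  set ψ := S.1.orderIsoOfFin S.2 with hψ
  have hmem : ∀ i, c i ∈ S.1 := fun i => Finset.mem_image.mpr ⟨i, Finset.mem_univ i, rfl⟩
  set φ : Fin t → Fin t := fun i => ψ.symm ⟨c i, hmem i⟩ with hφ
  have hφinj : Function.Injective φ := by
    intro i i' hii
    have := congrArg ψ hii
    rw [OrderIso.apply_symm_apply, OrderIso.apply_symm_apply] at this
    exact hc (congrArg Subtype.val this)
  have hφbij : Function.Bijective φ := (Finite.injective_iff_bijective).mp hφinj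
  set φe := Equiv.ofBijective φ hφbij with hφe
  obtain ⟨r, hr⟩ := hA ⟨S, a ∘ φe.symm⟩
  refine ⟨r, fun i => ?_⟩
  have h1 : embIC S (φ i) = c i := by
    have h2 : ψ (φ i) = ⟨c i, hmem i⟩ := by rw [hφ]; exact ψ.apply_symm_apply _
    have h3 : (ψ (φ i) : Fin k) = embIC S (φ i) := Finset.coe_orderIsoOfFin_apply _ _ _
    rw [← h3, h2]
  have h4 := hr (φ i)
  rw [h1] at h4
  rw [h4]
  have h5 : φe.symm (φ i) = i := by
    have : φ i = φe i := rfl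
    rw [this, Equiv.symm_apply_apply]
  rw [show a ∘ φe.symm = fun x => a (φe.symm x) from rfl]
  simp only []
  rw [h5]

lemma can_le_patch {t k v M : ℕ} (hv0 : 0 < v) (A0 : Fin M → Fin k → Fin v) :
    CAN t k v ≤ M + (Finset.univ.filter (fun ic : ICidx t k v => ¬ coversIC A0 ic)).card := by
  set T := Finset.univ.filter (fun ic : ICidx t k v => ¬ coversIC A0 ic) with hT
  set patch : ICidx t k v → Fin k → Fin v := fun ic x =>
    if hx : x ∈ ic.1.1 then ic.2 ((ic.1.1.orderIsoOfFin ic.1.2).symm ⟨x, hx⟩) else ⟨0, hv0⟩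
    with hpatchdef
  have hpatch : ∀ (ic : ICidx t k v) (i : Fin t), patch ic (embIC ic.1 i) = ic.2 i := by
    intro ic i
    have hx : embIC ic.1 i ∈ ic.1.1 := Finset.orderEmbOfFin_mem _ _ _
    rw [hpatchdef]
    simp only []
    rw [dif_pos hx]
    congr 1
    have h1 : (⟨embIC ic.1 i, hx⟩ : {x // x ∈ ic.1.1}) = (ic.1.1.orderIsoOfFin ic.1.2) i :=
      Subtype.ext (Finset.coe_orderIsoOfFin_apply _ _ _).symm
    rw [h1, OrderIso.symm_apply_apply]
  set A : Fin (M + T.card) → Fin k → Fin v := fun r =>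
    if h : r.1 < M then A0 ⟨r.1, h⟩
    else patch (T.equivFin.symm ⟨r.1 - M, by have := r.isLt; omega⟩).1
    with hA
  have hcov : ∀ ic : ICidx t k v, coversIC A ic := by
    intro ic
    by_cases hic : ic ∈ T
    · set m := T.equivFin ⟨ic, hic⟩ with hm
      refine ⟨⟨M + m.1, by have := m.isLt; omega⟩, fun i => ?_⟩
      rw [hA]
      simp only []
      rw [dif_neg (by omega)]
      have h1 : (⟨M + m.1 - M, by have := m.isLt; omega⟩ : Fin T.card) = m :=
        Fin.ext (by simp)
      rw [h1, hm, Equiv.symm_apply_apply]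
      exact hpatch ic i
    · have hic2 : coversIC A0 ic := by
        rw [hT] at hic
        simp only [Finset.mem_filter, Finset.mem_univ, true_and, not_not] at hic
        exact hic
      obtain ⟨r0, hr0⟩ := hic2
      refine ⟨⟨r0.1, by have := r0.isLt; omega⟩, fun i => ?_⟩
      rw [hA]
      simp only []
      rw [dif_pos r0.isLt]
      have : (⟨r0.1, r0.isLt⟩ : Fin M) = r0 := Fin.ext rfl
      rw [this]
      exact hr0 i
  have hmem : (M + T.card) ∈ {N : ℕ | ∃ A : Fin N → Fin k → Fin v, IsCoveringArray t A} :=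
    ⟨A, isCoveringArray_of_canonical A hcov⟩
  exact Nat.sInf_le hmem


lemma exists_fpf (v : ℕ) (hv : 2 ≤ v) : ∃ σ : Equiv.Perm (Fin v), ∀ a, σ a ≠ a := by
  obtain ⟨n, rfl⟩ : ∃ n, v = n + 2 := ⟨v - 2, by omega⟩
  refine ⟨finRotate (n+2), fun a h => ?_⟩
  rw [finRotate_succ_apply] at h
  have h1 : (1 : Fin (n+2)) = 0 := by
    have h2 : a + 1 = a + 0 := by rw [add_zero]; exact h
    exact add_left_cancel h2
  have := congrArg Fin.val h1
  simp at this

lemma choose_strict {t k : ℕ} (ht0 : 0 < t) (hk : 2*t ≤ k) : (k-t).choose t < k.choose t := by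
  have h1 : t ≤ k - t := by omega
  have h2 : (k-t).choose t ≤ (k-1).choose t := Nat.choose_mono t (by omega)
  have h3 : k.choose t = (k-1).choose (t-1) + (k-1).choose t := by
    have hk1 : k = (k-1) + 1 := by omega
    have ht1 : t = (t-1) + 1 := by omega
    rw [hk1, ht1]
    exact Nat.choose_succ_succ (k-1) (t-1)
  have h4 : 0 < (k-1).choose (t-1) := Nat.choose_pos (by omega)
  omega

set_option maxHeartbeats 1000000 in
/-- LLL-based two-stage bound. With `η = C(k,t)` and `ρ = C(k,t) − C(k−t,t)`, if
`η·v^t·log(v^t/(v^t−1))/ρ ≤ v^t`, then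
`CAN(t,k,v) ≤ (log C(k,t) + t log v + log log (v^t/(v^t−1)) + 2)/log(v^t/(v^t−1)) − η/ρ`. -/
theorem lll_two_stage_bound (t k v : ℕ) (ht : 2 ≤ t) (hk : 2 * t ≤ k) (hv : 2 ≤ v)
    (h : (k.choose t : ℝ) * (v : ℝ) ^ t *
          Real.log ((v : ℝ) ^ t / ((v : ℝ) ^ t - 1)) /
        ((k.choose t : ℝ) - ((k - t).choose t : ℝ)) ≤ (v : ℝ) ^ t) :
    (CAN t k v : ℝ) ≤
      (Real.log (k.choose t) + t * Real.log v +
          Real.log (Real.log ((v : ℝ) ^ t / ((v : ℝ) ^ t - 1))) + 2) /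
        Real.log ((v : ℝ) ^ t / ((v : ℝ) ^ t - 1)) -
      (k.choose t : ℝ) / ((k.choose t : ℝ) - ((k - t).choose t : ℝ)) := by
  have ht0 : 0 < t := by omega
  have htk : t ≤ k := by omega
  have hv0 : 0 < v := by omega
  have hV4 : 4 ≤ v^t := by
    calc 4 = 2^2 := by norm_num
    _ ≤ 2^t := Nat.pow_le_pow_right (by norm_num) ht
    _ ≤ v^t := Nat.pow_le_pow_left hv t
  set V : ℝ := (v:ℝ)^t with hVdef
  have hVr : (4:ℝ) ≤ V := by
    rw [hVdef]
    exact_mod_cast hV4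
  have hV0 : (0:ℝ) < V := by linarith
  have hchoose := choose_strict ht0 hk
  set η : ℝ := (k.choose t : ℝ) with hηdef
  set ρ : ℝ := (k.choose t : ℝ) - ((k-t).choose t : ℝ) with hρdef
  have hρpos : (0:ℝ) < ρ := by
    rw [hρdef]
    have : ((k-t).choose t : ℝ) < (k.choose t : ℝ) := by exact_mod_cast hchoose
    linarith
  have hη2 : (2:ℝ) ≤ η := by
    rw [hηdef]
    have h1 : 0 < (k-t).choose t := Nat.choose_pos (by omega)
    have h2 : 2 ≤ k.choose t := by omega
    exact_mod_cast h2
  have hh : η * Real.log (V/(V-1)) ≤ ρ := by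
    have h1 : η * V * Real.log (V/(V-1)) ≤ V * ρ := by
      have := (div_le_iff₀ hρpos).mp h
      linarith [this]
    have h2 : V * (η * Real.log (V/(V-1))) ≤ V * ρ := by
      have hr : η * V * Real.log (V/(V-1)) = V * (η * Real.log (V/(V-1))) := by ring
      linarith [hr ▸ h1]
    exact le_of_mul_le_mul_left h2 hV0
  obtain ⟨j, hj⟩ := analytic_core η ρ V hVr hη2 hρpos hh
  obtain ⟨σ, hσ⟩ := exists_fpf v hv
  obtain ⟨ω, hω⟩ := exists_low_miss ht0 htk hv hV4 σ hσ j
  set U := (Finset.univ.filter (fun ic : ICidx t k v => ¬ coversIC (ArrOf σ j ω) ic)).card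
    with hUdef
  have hCAN : CAN t k v ≤ (2+j) + U := can_le_patch hv0 (ArrOf σ j ω)
  -- cast the counting bound to the reals
  have hsplitnat : v^k = v^(k-t) * v^t := by
    rw [← pow_add]; congr 1; omega
  have hsub1 : 2*v^(k-t) ≤ v^k := by
    calc 2*v^(k-t) = v^(k-t)*2 := by ring
    _ ≤ v^(k-t)*v^t := Nat.mul_le_mul_left _ (by omega)
    _ = v^k := hsplitnat.symm
  have hsub2 : v^(k-t) ≤ v^k := by
    calc v^(k-t) = v^(k-t)*1 := by ring
    _ ≤ v^(k-t)*v^t := Nat.mul_le_mul_left _ (by omega)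
    _ = v^k := hsplitnat.symm
  have hωr : (U:ℝ) * ((v:ℝ)^k)^(j+1)
      ≤ η * V * (((v:ℝ)^k - 2*(v:ℝ)^(k-t)) * ((v:ℝ)^k - (v:ℝ)^(k-t))^j) := by
    have hc : ((U * (v^k)^(j+1) : ℕ) : ℝ)
        ≤ (((k.choose t * v^t) * ((v^k - 2*v^(k-t)) * (v^k - v^(k-t))^j) : ℕ) : ℝ) :=
      Nat.cast_le.mpr hω
    push_cast [Nat.cast_sub hsub1, Nat.cast_sub hsub2] at hc
    rw [hηdef, hVdef]
    convert hc using 2 <;> push_cast <;> ring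
  have hWt0 : (0:ℝ) < (v:ℝ)^(k-t) := by positivity
  have hW : ((v:ℝ))^k = (v:ℝ)^(k-t) * V := by
    rw [hVdef, ← pow_add]; congr 1; omega
  have hf1 : (v:ℝ)^k - 2*(v:ℝ)^(k-t) = (v:ℝ)^(k-t) * (V-2) := by rw [hW]; ring
  have hf2 : (v:ℝ)^k - (v:ℝ)^(k-t) = (v:ℝ)^(k-t) * (V-1) := by rw [hW]; ring
  have hkey : (U:ℝ) * V^(j+1) ≤ η * V * ((V-2) * (V-1)^j) := by
    apply le_of_mul_le_mul_right _ (pow_pos hWt0 (j+1))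
    calc (U:ℝ) * V^(j+1) * ((v:ℝ)^(k-t))^(j+1) = (U:ℝ)*((v:ℝ)^k)^(j+1) := by
          rw [hW]; ring
    _ ≤ η * V * (((v:ℝ)^k - 2*(v:ℝ)^(k-t)) * ((v:ℝ)^k - (v:ℝ)^(k-t))^j) := hωr
    _ = η * V * ((V-2) * (V-1)^j) * ((v:ℝ)^(k-t))^(j+1) := by
          rw [hf1, hf2, mul_pow]; ring
  have hUb : (U:ℝ) ≤ η * (V-2) * ((V-1)/V)^j := by
    have h2 : (U:ℝ) ≤ η * V * ((V-2)*(V-1)^j) / V^(j+1) := by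
      rw [le_div_iff₀ (pow_pos hV0 (j+1))]
      exact hkey
    calc (U:ℝ) ≤ η * V * ((V-2)*(V-1)^j) / V^(j+1) := h2
    _ = η * (V-2) * ((V-1)/V)^j := by
        rw [div_pow]
        field_simp
        ring
  have hfinal : (CAN t k v : ℝ) ≤ 2 + (j:ℝ) + η*(V-2)*((V-1)/V)^j := by
    have hc : (CAN t k v : ℝ) ≤ (((2+j)+U : ℕ) : ℝ) := Nat.cast_le.mpr hCAN
    push_cast at hc
    linarith [hUb]
  have hlogV : (t:ℝ) * Real.log v = Real.log V := by
    rw [hVdef, Real.log_pow]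
  rw [hlogV]
  calc (CAN t k v : ℝ) ≤ 2 + (j:ℝ) + η*(V-2)*((V-1)/V)^j := hfinal
  _ ≤ (Real.log η + Real.log V + Real.log (Real.log (V/(V-1))) + 2) / (Real.log (V/(V-1))) - η/ρ := hj
end
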